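/- Let (𝔄, ω, τ, K) be a compact C*-dynamical system with ω a trace and (K, Σ, μ) a Følner semigroup. Let A ∈ 𝔄 be positive with ω(A) > 0, and take any m₀, …, m_k ∈ ℕ ∪ {0}. Assume that the functions g ↦ ω(τ_{g^{m₀}}(A) ⋯ τ_{g^{m_k}}(A)) and g ↦ ‖τ_{g^{m_j}}(A) − A‖_ω (for j = 0, …, k) are Σ-measurable on K. Then there exists a Følner net (Λ_α) in (K, Σ, μ) such that liminf_α (1/μ(Λ_α)) ∫_{Λ_α} |ω(τ_{g^{m₀}}(A) τ_{g^{m₁}}(A) ⋯ τ_{g^{m_k}}(A))| dμ(g) > 0. -/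

import Mathlib

open Filter MeasureTheory
open scoped symmDiff ENNReal ComplexOrder

/-- The seminorm `‖A‖_ω = √(ω(A*A))` associated to a positive linear functional `ω`. -/
noncomputable def omegaSeminorm {𝔄 : Type*} [NonUnitalNormedRing 𝔄] [StarRing 𝔄]
    [NormedSpace ℂ 𝔄] (ω : 𝔄 →ₗ[ℂ] ℂ) (A : 𝔄) : ℝ :=
  Real.sqrt (ω (star A * A)).re

/-- A net `(Λ_α)` of measurable sets in a measure semigroup `(K, Σ, μ)` is a Følner net
if left translates of measurable sets are measurable, `0 < μ(Λ_α) < ∞` for `α` large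
enough, and `μ(Λ_α Δ (gΛ_α))/μ(Λ_α) → 0` for every `g ∈ K`. -/
def IsFolnerNet {K : Type*} [Semigroup K] [MeasurableSpace K]
    {ι : Type*} [Preorder ι] (μ : Measure K) (Λ : ι → Set K) : Prop :=
  (∀ (g : K) (S : Set K), MeasurableSet S → MeasurableSet ((g * ·) '' S)) ∧
  (∀ α, MeasurableSet (Λ α)) ∧
  (∀ᶠ α in atTop, 0 < μ (Λ α) ∧ μ (Λ α) < ∞) ∧
  (∀ g : K, Tendsto (fun α => μ ((Λ α) ∆ ((g * ·) '' Λ α)) / μ (Λ α)) atTop (nhds 0))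

section Herm
set_option linter.unusedSectionVars false
variable {𝔄 : Type*} [NormedRing 𝔄] [StarRing 𝔄] [CStarRing 𝔄] [NormedAlgebra ℂ 𝔄]
    [StarModule ℂ 𝔄] [CompleteSpace 𝔄]
    (ω : 𝔄 →ₗ[ℂ] ℂ)
    (hω_pos : ∀ A : 𝔄, 0 ≤ ω (star A * A))

include hω_pos in
lemma omega_star' (X : 𝔄) : ω (star X) = starRingEnd ℂ (ω X) := by
  have h1 := (Complex.le_def.mp (hω_pos (X + 1))).2
  have h2 := (Complex.le_def.mp (hω_pos (X + Complex.I • 1))).2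
  have i0 := (Complex.le_def.mp (hω_pos X)).2
  have i1 : (ω 1).im = 0 := by
    have := (Complex.le_def.mp (hω_pos 1)).2
    simpa using this.symm
  have e1 : star (X + 1) * (X + 1) = star X * X + (star X + X) + 1 := by
    simp only [star_add, star_one, add_mul, mul_add, one_mul, mul_one]
    abel
  have e2 : star (X + Complex.I • 1) * (X + Complex.I • 1)
      = star X * X + (Complex.I • star X - Complex.I • X) + 1 := by
    have hs : star (X + Complex.I • 1) = star X - Complex.I • 1 := by
      simp [star_smul, Complex.star_def, Complex.conj_I, neg_smul]
      abel
    rw [hs]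
    simp only [sub_mul, mul_add, smul_sub, smul_add, smul_mul_assoc, mul_smul_comm,
      smul_smul, Complex.I_mul_I, one_mul, mul_one]
    module
  have r1 : (ω (star X)).im + (ω X).im = 0 := by
    rw [e1] at h1
    simp only [map_add, map_one, Complex.add_im, ← i0, Complex.zero_im] at h1
    linarith [h1, i1]
  have r2 : (ω X).re - (ω (star X)).re = 0 := by
    rw [e2] at h2
    simp only [map_add, map_sub, LinearMap.map_smul, map_one, Complex.add_im, Complex.sub_im,
      smul_eq_mul, Complex.mul_im, Complex.I_re, Complex.I_im, ← i0, Complex.zero_im] at h2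
    linarith [h2, i1]
  apply Complex.ext <;> simp only [Complex.conj_re, Complex.conj_im] <;> linarith

end Herm


section CS
set_option linter.unusedSectionVars false
variable {𝔄 : Type*} [NormedRing 𝔄] [StarRing 𝔄] [CStarRing 𝔄] [NormedAlgebra ℂ 𝔄]
    [StarModule ℂ 𝔄] [CompleteSpace 𝔄]
    (ω : 𝔄 →ₗ[ℂ] ℂ)
    (hω_pos : ∀ A : 𝔄, 0 ≤ ω (star A * A))

include hω_pos

lemma omega_sq_re_nonneg (X : 𝔄) : 0 ≤ (ω (star X * X)).re :=
  (Complex.le_def.mp (hω_pos X)).1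

lemma omega_sq_im (X : 𝔄) : (ω (star X * X)).im = 0 := by
  have := (Complex.le_def.mp (hω_pos X)).2; simpa using this.symm

lemma omegaSeminorm_sq (X : 𝔄) : omegaSeminorm ω X ^ 2 = (ω (star X * X)).re := by
  rw [omegaSeminorm, Real.sq_sqrt (omega_sq_re_nonneg ω hω_pos X)]

omit hω_pos in
lemma omega_star_mul (hstar : ∀ Z : 𝔄, ω (star Z) = starRingEnd ℂ (ω Z)) (X Y : 𝔄) :
    ω (star Y * X) = starRingEnd ℂ (ω (star X * Y)) := by
  rw [← hstar (star X * Y)]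
  congr 1
  simp [star_mul]

include hω_pos in
/-- Cauchy-Schwarz for the positive functional. -/
lemma omega_cauchy_schwarz (hstar : ∀ Z : 𝔄, ω (star Z) = starRingEnd ℂ (ω Z)) (X Y : 𝔄) :
    ‖ω (star X * Y)‖ ≤ omegaSeminorm ω X * omegaSeminorm ω Y := by
  set B := ω (star X * Y) with hB
  by_cases hB0 : B = 0
  · rw [hB0]
    simpa [omegaSeminorm] using mul_nonneg (Real.sqrt_nonneg _) (Real.sqrt_nonneg _)
  set P := (ω (star X * X)).re with hPdef
  set Q := (ω (star Y * Y)).re with hQdef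
  have hP : 0 ≤ P := omega_sq_re_nonneg ω hω_pos X
  have hQ : 0 ≤ Q := omega_sq_re_nonneg ω hω_pos Y
  set a : ℝ := ‖B‖ with ha
  have ha0 : (0:ℝ) < a := norm_pos_iff.mpr hB0
  have habs : ((a : ℝ) : ℂ) ≠ 0 := by exact_mod_cast ha0.ne'
  set s : ℂ := -(starRingEnd ℂ B) / (a : ℂ) with hs
  have hconjB : starRingEnd ℂ B * B = ((a^2 : ℝ) : ℂ) := by
    rw [mul_comm, Complex.mul_conj']
    norm_cast
  have hsB : s * B = -((a : ℝ) : ℂ) := by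
    rw [hs, div_mul_eq_mul_div, neg_mul, hconjB]
    field_simp
    norm_cast
  have hconjs : starRingEnd ℂ s * s = 1 := by
    rw [hs]
    simp only [map_div₀, map_neg, Complex.conj_conj, Complex.conj_ofReal]
    rw [div_mul_div_comm, neg_mul_neg, mul_comm B _, hconjB]
    rw [div_eq_one_iff_eq (by positivity)]
    norm_cast
    ring
  -- quadratic nonnegativity
  have key : ∀ t : ℝ, 0 ≤ P * (t * t) + (-(2 * a)) * t + Q := by
    intro t
    have hZ := omega_sq_re_nonneg ω hω_pos ((t : ℂ) • X + s • Y)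
    have hexp : star ((t:ℂ) • X + s • Y) * ((t:ℂ) • X + s • Y)
        = ((t*t : ℝ) : ℂ) • (star X * X) + ((t:ℂ) * s) • (star X * Y)
          + ((t:ℂ) * starRingEnd ℂ s) • (star Y * X)
          + (starRingEnd ℂ s * s) • (star Y * Y) := by
      simp only [star_add, star_smul, Complex.star_def, Complex.conj_ofReal, add_mul, mul_add,
        smul_mul_assoc, mul_smul_comm, smul_smul]
      push_cast
      module
    rw [hexp] at hZ
    have hYX : ω (star Y * X) = starRingEnd ℂ B := omega_star_mul ω hstar X Y
    simp only [map_add, LinearMap.map_smul, smul_eq_mul, hYX, hconjs, ← hB] at hZ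
    have heq : ((t*t:ℝ):ℂ) * ω (star X * X) + (t:ℂ) * s * B
        + (t:ℂ) * starRingEnd ℂ s * starRingEnd ℂ B + 1 * ω (star Y * Y)
        = ((t*t:ℝ):ℂ) * ω (star X * X) + ((-(2*a)*t : ℝ):ℂ) + ω (star Y * Y) := by
      have h2 : (t:ℂ) * starRingEnd ℂ s * starRingEnd ℂ B
          = starRingEnd ℂ ((t:ℂ) * s * B) := by
        simp only [map_mul, Complex.conj_ofReal]
      rw [h2, mul_assoc, hsB]
      simp only [map_mul, map_neg, Complex.conj_ofReal, mul_neg, one_mul]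
      push_cast
      ring
    rw [heq] at hZ
    simp only [Complex.add_re, Complex.mul_re, Complex.ofReal_re, Complex.ofReal_im,
      omega_sq_im ω hω_pos X, omega_sq_im ω hω_pos Y] at hZ
    have hPz : (ω (star X * X)).re = P := rfl
    have hQz : (ω (star Y * Y)).re = Q := rfl
    rw [hPz] at hZ
    nlinarith [hZ]
  -- conclude
  have hd := discrim_le_zero key
  rw [discrim] at hd
  have hBPQ : a ^ 2 ≤ P * Q := by nlinarith
  have : a ≤ Real.sqrt P * Real.sqrt Q := by
    rw [← Real.sqrt_mul hP]
    have h1 : a = Real.sqrt (a^2) := (Real.sqrt_sq ha0.le).symm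
    rw [h1]
    exact Real.sqrt_le_sqrt hBPQ
  exact this
end CS


section Order
set_option linter.unusedSectionVars false
variable {𝔄 : Type*} [NormedRing 𝔄] [StarRing 𝔄] [CStarRing 𝔄] [NormedAlgebra ℂ 𝔄]
    [StarModule ℂ 𝔄] [CompleteSpace 𝔄]
    (ω : 𝔄 →ₗ[ℂ] ℂ)
    (hω_pos : ∀ A : 𝔄, 0 ≤ ω (star A * A))

include hω_pos

lemma omega_conj_bound (W Y : 𝔄) (hY : IsSelfAdjoint Y) :
    (ω (star W * Y * W)).re ≤ ‖Y‖ * (ω (star W * W)).re := by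
  letI : CStarAlgebra 𝔄 := { }
  letI : PartialOrder 𝔄 := CStarAlgebra.spectralOrder 𝔄
  letI : StarOrderedRing 𝔄 := CStarAlgebra.spectralOrderedRing 𝔄
  have h1 : star W * Y * W ≤ star W * algebraMap ℝ 𝔄 ‖Y‖ * W :=
    star_left_conjugate_le_conjugate hY.le_algebraMap_norm_self W
  have h2 : star W * algebraMap ℝ 𝔄 ‖Y‖ * W = ((‖Y‖ : ℂ)) • (star W * W) := by
    rw [IsScalarTower.algebraMap_apply ℝ ℂ 𝔄, Algebra.algebraMap_eq_smul_one]
    rw [mul_smul_comm, smul_mul_assoc, mul_one, Complex.coe_algebraMap]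
  have hmono : 0 ≤ ω (star W * algebraMap ℝ 𝔄 ‖Y‖ * W - star W * Y * W) := by
    have hmem := StarOrderedRing.nonneg_iff.mp (sub_nonneg.mpr h1)
    refine AddSubmonoid.closure_induction ?_ ?_ ?_ hmem
    · rintro x ⟨s, rfl⟩; exact hω_pos s
    · simp
    · intro x y _ _ hx hy; rw [map_add]; exact add_nonneg hx hy
  rw [map_sub, h2, LinearMap.map_smul] at hmono
  have := (Complex.le_def.mp hmono).1
  simp only [Complex.sub_re, Complex.smul_re, smul_eq_mul, Complex.sub_im, Complex.zero_re,
    Complex.mul_re, Complex.ofReal_re, Complex.ofReal_im] at this ⊢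
  nlinarith [this]

lemma omega_le_norm_sq (X : 𝔄) : (ω (star X * X)).re ≤ ‖X‖^2 * (ω 1).re := by
  have h := omega_conj_bound ω hω_pos 1 (star X * X) (IsSelfAdjoint.star_mul_self X)
  rw [star_one, one_mul, mul_one, one_mul] at h
  calc (ω (star X * X)).re ≤ ‖star X * X‖ * (ω 1).re := h
    _ = ‖X‖^2 * (ω 1).re := by rw [CStarRing.norm_star_mul_self]; ring

end Order


/-- `sgpow g n = g ^ (n+1)` in a semigroup. -/
private def sgpow {K : Type*} [Semigroup K] (g : K) : ℕ → K
  | 0 => g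
  | n+1 => sgpow g n * g

private lemma sgpow_succ_left {K : Type*} [Semigroup K] (g : K) (n : ℕ) :
    sgpow g (n + 1) = g * sgpow g n := by
  induction n with
  | zero => rfl
  | succ n ih => show sgpow g (n+1) * g = g * (sgpow g n * g); rw [ih, mul_assoc]

private lemma iter_congr {α : Type*} {f f' : α → α} (h : ∀ x, f x = f' x) :
    ∀ (n : ℕ) (x : α), f^[n] x = f'^[n] x := by
  intro n
  induction n with
  | zero => intro x; rfl
  | succ n ih => intro x
                 rw [Function.iterate_succ_apply, Function.iterate_succ_apply, h, ih]

section Dyn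
set_option linter.unusedSectionVars false
variable {𝔄 : Type*} [NormedRing 𝔄] [StarRing 𝔄] [CStarRing 𝔄] [NormedAlgebra ℂ 𝔄]
    [StarModule ℂ 𝔄] [CompleteSpace 𝔄]
    {K : Type*} [Semigroup K]
    (ω : 𝔄 →ₗ[ℂ] ℂ) (τ : K → 𝔄 →ₗ[ℂ] 𝔄)
    (hτ_mul : ∀ g h : K, ∀ A : 𝔄, τ g (τ h A) = τ (g * h) A)
    (hτ_ω : ∀ g : K, ∀ A : 𝔄, omegaSeminorm ω (τ g A) = omegaSeminorm ω A)
    (hτ_norm : ∀ g : K, ∀ A : 𝔄, ‖τ g A‖ ≤ ‖A‖)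

include hτ_mul in
private lemma tau_sgpow (g : K) : ∀ (n : ℕ) (X : 𝔄), τ (sgpow g n) X = (⇑(τ g))^[n+1] X := by
  intro n
  induction n with
  | zero => intro X; rfl
  | succ n ih =>
      intro X
      show τ (sgpow g n * g) X = _
      rw [← hτ_mul (sgpow g n) g X, ih (τ g X), ← Function.iterate_succ_apply]

include hτ_ω in
private lemma iter_sn (g : K) : ∀ (n : ℕ) (X : 𝔄),
    omegaSeminorm ω ((⇑(τ g))^[n] X) = omegaSeminorm ω X := by
  intro n
  induction n with
  | zero => intro X; rfl
  | succ n ih => intro X; rw [Function.iterate_succ_apply', hτ_ω, ih]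

include hτ_norm in
private lemma iter_norm (g : K) : ∀ (n : ℕ) (X : 𝔄), ‖(⇑(τ g))^[n] X‖ ≤ ‖X‖ := by
  intro n
  induction n with
  | zero => intro X; exact le_refl _
  | succ n ih => intro X
                 rw [Function.iterate_succ_apply']
                 exact le_trans (hτ_norm g _) (ih X)

private lemma iter_iter {e g : K} {s : ℕ} (h : ∀ X : 𝔄, τ e X = (⇑(τ g))^[s] X) :
    ∀ (n : ℕ) (X : 𝔄), (⇑(τ e))^[n] X = (⇑(τ g))^[s * n] X := by
  intro n
  induction n with
  | zero => intro X; simp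
  | succ n ih =>
      intro X
      rw [Function.iterate_succ_apply, h X, ih, ← Function.iterate_add_apply,
        Nat.mul_succ, Nat.add_comm]

end Dyn

section SN
set_option linter.unusedSectionVars false
variable {𝔄 : Type*} [NormedRing 𝔄] [StarRing 𝔄] [CStarRing 𝔄] [NormedAlgebra ℂ 𝔄]
    [StarModule ℂ 𝔄] [CompleteSpace 𝔄]
    (ω : 𝔄 →ₗ[ℂ] ℂ)
    (hω_pos : ∀ A : 𝔄, 0 ≤ ω (star A * A))
    (hω_one : ω 1 = 1)
    (hω_tr : ∀ A B : 𝔄, ω (A * B) = ω (B * A))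

lemma omegaSeminorm_nonneg (X : 𝔄) : 0 ≤ omegaSeminorm ω X := Real.sqrt_nonneg _

include hω_pos

include hω_one in
lemma sn_one : omegaSeminorm ω 1 = 1 := by
  rw [omegaSeminorm, star_one, one_mul, hω_one]
  simp

include hω_one in
lemma abs_omega_le (hstar : ∀ Z : 𝔄, ω (star Z) = starRingEnd ℂ (ω Z)) (Z : 𝔄) :
    ‖ω Z‖ ≤ omegaSeminorm ω Z := by
  have h := omega_cauchy_schwarz ω hω_pos hstar 1 Z
  rwa [star_one, one_mul, sn_one ω hω_pos hω_one, one_mul] at h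

omit hω_pos in
include hω_tr in
lemma sn_star (Z : 𝔄) : omegaSeminorm ω (star Z) = omegaSeminorm ω Z := by
  rw [omegaSeminorm, omegaSeminorm, star_star, hω_tr]

lemma sn_add (hstar : ∀ Z : 𝔄, ω (star Z) = starRingEnd ℂ (ω Z)) (X Y : 𝔄) :
    omegaSeminorm ω (X + Y) ≤ omegaSeminorm ω X + omegaSeminorm ω Y := by
  have hcs := omega_cauchy_schwarz ω hω_pos hstar X Y
  have hexp : star (X + Y) * (X + Y)
      = star X * X + (star X * Y + star Y * X) + star Y * Y := by
    simp only [star_add, add_mul, mul_add]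
    abel
  have hYX : ω (star Y * X) = starRingEnd ℂ (ω (star X * Y)) := omega_star_mul ω hstar X Y
  have hre : (ω (star (X + Y) * (X + Y))).re
      ≤ (omegaSeminorm ω X + omegaSeminorm ω Y)^2 := by
    rw [hexp]
    simp only [map_add, Complex.add_re, hYX]
    have h2 : (ω (star X * Y)).re + (starRingEnd ℂ (ω (star X * Y))).re
        = 2 * (ω (star X * Y)).re := by
      simp [Complex.conj_re]; ring
    have habs : (ω (star X * Y)).re ≤ ‖ω (star X * Y)‖ := Complex.re_le_norm _
    have h3 := omegaSeminorm_sq ω hω_pos X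
    have h4 := omegaSeminorm_sq ω hω_pos Y
    nlinarith [omegaSeminorm_nonneg ω X, omegaSeminorm_nonneg ω Y,
      norm_nonneg (ω (star X * Y))]
  calc omegaSeminorm ω (X + Y) = Real.sqrt ((ω (star (X+Y) * (X+Y))).re) := rfl
    _ ≤ Real.sqrt ((omegaSeminorm ω X + omegaSeminorm ω Y)^2) := Real.sqrt_le_sqrt hre
    _ = omegaSeminorm ω X + omegaSeminorm ω Y := Real.sqrt_sq
        (add_nonneg (omegaSeminorm_nonneg ω X) (omegaSeminorm_nonneg ω Y))

omit hω_pos in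
lemma sn_neg (X : 𝔄) : omegaSeminorm ω (-X) = omegaSeminorm ω X := by
  rw [omegaSeminorm, omegaSeminorm, star_neg, neg_mul_neg]

omit hω_pos in
lemma sn_sub_rev (X Y : 𝔄) : omegaSeminorm ω (X - Y) = omegaSeminorm ω (Y - X) := by
  rw [← sn_neg ω (X - Y), neg_sub]

lemma sn_sub_triangle (hstar : ∀ Z : 𝔄, ω (star Z) = starRingEnd ℂ (ω Z)) (X Y Z : 𝔄) :
    omegaSeminorm ω (X - Z) ≤ omegaSeminorm ω (X - Y) + omegaSeminorm ω (Y - Z) := by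
  have : X - Z = (X - Y) + (Y - Z) := by abel
  rw [this]
  exact sn_add ω hω_pos hstar _ _

include hω_one in
lemma sn_le_norm (X : 𝔄) : omegaSeminorm ω X ≤ ‖X‖ := by
  have h := omega_le_norm_sq ω hω_pos X
  rw [hω_one] at h
  simp only [Complex.one_re, mul_one] at h
  calc omegaSeminorm ω X = Real.sqrt ((ω (star X * X)).re) := rfl
    _ ≤ Real.sqrt (‖X‖^2) := Real.sqrt_le_sqrt h
    _ = ‖X‖ := Real.sqrt_sq (norm_nonneg X)

lemma sn_mul_left (Z W : 𝔄) : omegaSeminorm ω (Z * W) ≤ ‖Z‖ * omegaSeminorm ω W := by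
  have hexp : star (Z * W) * (Z * W) = star W * (star Z * Z) * W := by
    rw [star_mul]; noncomm_ring
  have h := omega_conj_bound ω hω_pos W (star Z * Z) (IsSelfAdjoint.star_mul_self Z)
  rw [← hexp] at h
  rw [CStarRing.norm_star_mul_self] at h
  calc omegaSeminorm ω (Z * W) = Real.sqrt ((ω (star (Z*W) * (Z*W))).re) := rfl
    _ ≤ Real.sqrt ((‖Z‖ * ‖Z‖) * ((ω (star W * W)).re)) := Real.sqrt_le_sqrt h
    _ = Real.sqrt (‖Z‖^2) * Real.sqrt ((ω (star W * W)).re) := by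
        rw [← Real.sqrt_mul (by positivity)]; ring_nf
    _ = ‖Z‖ * omegaSeminorm ω W := by rw [Real.sqrt_sq (norm_nonneg Z)]; rfl

include hω_tr in
lemma sn_mul_right (Z W : 𝔄) : omegaSeminorm ω (Z * W) ≤ omegaSeminorm ω Z * ‖W‖ := by
  have hexp : ω (star (Z * W) * (Z * W)) = ω (star (star Z) * (W * star W) * star Z) := by
    rw [star_mul, hω_tr]
    congr 1
    rw [star_star]
    noncomm_ring
  have h := omega_conj_bound ω hω_pos (star Z) (W * star W) (IsSelfAdjoint.mul_star_self W)
  rw [← hexp, CStarRing.norm_self_mul_star, star_star] at h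
  have htr : ω (Z * star Z) = ω (star Z * Z) := hω_tr Z (star Z)
  rw [htr] at h
  calc omegaSeminorm ω (Z * W) = Real.sqrt ((ω (star (Z*W) * (Z*W))).re) := rfl
    _ ≤ Real.sqrt ((‖W‖ * ‖W‖) * ((ω (star Z * Z)).re)) := Real.sqrt_le_sqrt h
    _ = Real.sqrt (‖W‖^2) * Real.sqrt ((ω (star Z * Z)).re) := by
        rw [← Real.sqrt_mul (by positivity)]; ring_nf
    _ = omegaSeminorm ω Z * ‖W‖ := by rw [Real.sqrt_sq (norm_nonneg W)]; rw [mul_comm]; rfl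

end SN

section Tele
set_option linter.unusedSectionVars false
variable {𝔄 : Type*} [NormedRing 𝔄] [StarRing 𝔄] [CStarRing 𝔄] [NormedAlgebra ℂ 𝔄]
    [StarModule ℂ 𝔄] [CompleteSpace 𝔄]
    (ω : 𝔄 →ₗ[ℂ] ℂ)
    (hω_pos : ∀ A : 𝔄, 0 ≤ ω (star A * A))
    (hω_one : ω 1 = 1)
    (hω_tr : ∀ A B : 𝔄, ω (A * B) = ω (B * A))

lemma list_prod_norm_le (hone : ‖(1 : 𝔄)‖ = 1) :
    ∀ (L : List 𝔄) (R : ℝ), (∀ x ∈ L, ‖x‖ ≤ R) → ‖L.prod‖ ≤ R ^ L.length := by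
  intro L
  induction L with
  | nil => intro R _; simpa [hone]
  | cons a l ih =>
      intro R hR
      have ha : ‖a‖ ≤ R := hR a List.mem_cons_self
      have hR0 : 0 ≤ R := le_trans (norm_nonneg a) ha
      have hl : ‖l.prod‖ ≤ R ^ l.length := ih R (fun x hx => hR x (List.mem_cons_of_mem a hx))
      calc ‖(a :: l).prod‖ = ‖a * l.prod‖ := by rw [List.prod_cons]
        _ ≤ ‖a‖ * ‖l.prod‖ := norm_mul_le _ _
        _ ≤ R * R ^ l.length := mul_le_mul ha hl (norm_nonneg _) hR0
        _ = R ^ (a :: l).length := by rw [List.length_cons, pow_succ]; ring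

include hω_pos hω_one hω_tr in
lemma sn_prod_diff (hstar : ∀ Z : 𝔄, ω (star Z) = starRingEnd ℂ (ω Z))
    (hone : ‖(1 : 𝔄)‖ = 1) :
    ∀ (n : ℕ) (B C : Fin n → 𝔄) (R : ℝ), 1 ≤ R → (∀ j, ‖B j‖ ≤ R) → (∀ j, ‖C j‖ ≤ R) →
    omegaSeminorm ω ((List.ofFn B).prod - (List.ofFn C).prod)
      ≤ (∑ j, omegaSeminorm ω (B j - C j)) * R ^ n := by
  intro n
  induction n with
  | zero =>
      intro B C R hR1 _ _
      simp [omegaSeminorm]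
  | succ n ih =>
      intro B C R hR1 hB hC
      have hR0 : (0:ℝ) ≤ R := le_trans zero_le_one hR1
      set P := (List.ofFn (fun i : Fin n => B i.succ)).prod with hP
      set Q := (List.ofFn (fun i : Fin n => C i.succ)).prod with hQ
      have hsplit : (List.ofFn B).prod - (List.ofFn C).prod
          = (B 0 - C 0) * P + C 0 * (P - Q) := by
        rw [List.ofFn_succ, List.ofFn_succ, List.prod_cons, List.prod_cons, ← hP, ← hQ]
        noncomm_ring
      have hPn : ‖P‖ ≤ R ^ n := by
        rw [hP]
        have := list_prod_norm_le hone (List.ofFn (fun i : Fin n => B i.succ)) R ?_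
        · simpa using this
        · intro x hx
          rw [List.mem_ofFn] at hx
          obtain ⟨i, rfl⟩ := hx
          exact hB _
      have hterm1 : omegaSeminorm ω ((B 0 - C 0) * P)
          ≤ omegaSeminorm ω (B 0 - C 0) * R ^ n :=
        le_trans (sn_mul_right ω hω_pos hω_tr _ _)
          (mul_le_mul_of_nonneg_left hPn (omegaSeminorm_nonneg ω _))
      have hterm2 : omegaSeminorm ω (C 0 * (P - Q))
          ≤ R * ((∑ j : Fin n, omegaSeminorm ω (B j.succ - C j.succ)) * R ^ n) := by
        refine le_trans (sn_mul_left ω hω_pos _ _) ?_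
        refine mul_le_mul (hC 0) (ih _ _ R hR1 (fun j : Fin n => hB j.succ) (fun j : Fin n => hC j.succ))
          (omegaSeminorm_nonneg ω _) hR0
      have hsum : (∑ j : Fin (n+1), omegaSeminorm ω (B j - C j))
          = omegaSeminorm ω (B 0 - C 0) + ∑ j : Fin n, omegaSeminorm ω (B j.succ - C j.succ) :=
        Fin.sum_univ_succ _
      have hRpow : R ^ n ≤ R ^ (n+1) := pow_le_pow_right₀ hR1 (Nat.le_succ n)
      have hsn0 : 0 ≤ omegaSeminorm ω (B 0 - C 0) := omegaSeminorm_nonneg ω _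
      have hsumnn : 0 ≤ ∑ j : Fin n, omegaSeminorm ω (B j.succ - C j.succ) :=
        Finset.sum_nonneg (fun j _ => omegaSeminorm_nonneg ω _)
      calc omegaSeminorm ω ((List.ofFn B).prod - (List.ofFn C).prod)
          = omegaSeminorm ω ((B 0 - C 0) * P + C 0 * (P - Q)) := by rw [hsplit]
        _ ≤ omegaSeminorm ω ((B 0 - C 0) * P) + omegaSeminorm ω (C 0 * (P - Q)) :=
            sn_add ω hω_pos hstar _ _
        _ ≤ omegaSeminorm ω (B 0 - C 0) * R ^ n
            + R * ((∑ j : Fin n, omegaSeminorm ω (B j.succ - C j.succ)) * R ^ n) :=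
            add_le_add hterm1 hterm2
        _ ≤ (∑ j : Fin (n+1), omegaSeminorm ω (B j - C j)) * R ^ (n+1) := by
            rw [hsum]
            have e : R * ((∑ j : Fin n, omegaSeminorm ω (B j.succ - C j.succ)) * R ^ n)
                = (∑ j : Fin n, omegaSeminorm ω (B j.succ - C j.succ)) * R ^ (n+1) := by
              ring
            have h' := mul_le_mul_of_nonneg_left hRpow hsn0
            rw [e, add_mul]
            linarith [h']
  
include hω_pos hω_one in
lemma omega_pow_pos (hstar : ∀ Z : 𝔄, ω (star Z) = starRingEnd ℂ (ω Z))
    (A : 𝔄) (hA : ∃ c : 𝔄, A = star c * c) (hωA : 0 < ω A) :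
    ∀ n : ℕ, 0 < (ω (A ^ n)).re := by
  obtain ⟨c, rfl⟩ := hA
  set A := star c * c
  have hsa : IsSelfAdjoint A := IsSelfAdjoint.star_mul_self c
  have him : ∀ n : ℕ, (ω (A ^ n)).im = 0 := by
    intro n
    have h1 : ω (star (A ^ n)) = ω (A ^ n) := by rw [(hsa.pow n).star_eq]
    rw [hstar] at h1
    exact Complex.conj_eq_iff_im.mp h1
  have hsq : ∀ X Y : 𝔄, (‖ω (star X * Y)‖)^2
      ≤ (ω (star X * X)).re * (ω (star Y * Y)).re := by
    intro X Y
    have h := omega_cauchy_schwarz ω hω_pos hstar X Y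
    have := omegaSeminorm_sq ω hω_pos X
    have := omegaSeminorm_sq ω hω_pos Y
    nlinarith [norm_nonneg (ω (star X * Y)),
      omegaSeminorm_nonneg ω X, omegaSeminorm_nonneg ω Y]
  have hpows : ∀ a b : ℕ, star (A ^ a) * A ^ b = A ^ (a + b) := by
    intro a b
    rw [(hsa.pow a).star_eq, ← pow_add]
  have harg : ∀ e1 e2 : ℕ, e1 = e2 → (ω (A^e1)).re = (ω (A^e2)).re := by
    intro _ _ h; rw [h]
  have habs : ∀ t : ℕ, (‖ω (A ^ t)‖)^2 = (ω (A ^ t)).re ^ 2 := by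
    intro t
    rw [Complex.sq_norm, Complex.normSq_apply, him t]
    ring
  have hsq' : ∀ a b : ℕ, (ω (A^(a+b))).re^2 ≤ (ω (A^(a+a))).re * (ω (A^(b+b))).re := by
    intro a b
    have h := hsq (A ^ a) (A ^ b)
    rw [hpows a b, hpows a a, hpows b b, habs] at h
    exact h
  have hsq'' : ∀ a b : ℕ,
      (ω (A^(a+b+1))).re^2 ≤ (ω (A^(a+a+1))).re * (ω (A^(b+b+1))).re := by
    intro a b
    have key : ∀ a b : ℕ, star (c * A ^ a) * (c * A ^ b) = A ^ (a + b + 1) := by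
      intro a b
      rw [star_mul, (hsa.pow a).star_eq]
      have h1 : A ^ a * star c * (c * A ^ b) = A ^ a * (star c * c) * A ^ b := by
        noncomm_ring
      rw [h1, show star c * c = A from rfl, ← pow_succ, ← pow_add]
      congr 1
      omega
    have h := hsq (c * A ^ a) (c * A ^ b)
    rw [key a b, key a a, key b b, habs] at h
    exact h
  have hstep : ∀ s : ℕ, (ω (A ^ (s+1))).re ^ 2 ≤ (ω (A ^ s)).re * (ω (A ^ (s+2))).re := by
    intro s
    rcases Nat.even_or_odd s with ⟨t, rfl⟩ | ⟨t, rfl⟩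
    · calc (ω (A^(t+t+1))).re^2 = (ω (A^(t+(t+1)))).re^2 := by
            rw [harg (t+t+1) (t+(t+1)) (by omega)]
        _ ≤ (ω (A^(t+t))).re * (ω (A^((t+1)+(t+1)))).re := hsq' t (t+1)
        _ = (ω (A^(t+t))).re * (ω (A^(t+t+2))).re := by
            rw [harg ((t+1)+(t+1)) (t+t+2) (by omega)]
    · calc (ω (A^(2*t+1+1))).re^2 = (ω (A^(t+(t+1)+1))).re^2 := by
            rw [harg (2*t+1+1) (t+(t+1)+1) (by omega)]
        _ ≤ (ω (A^(t+t+1))).re * (ω (A^((t+1)+(t+1)+1))).re := hsq'' t (t+1)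
        _ = (ω (A^(2*t+1))).re * (ω (A^(2*t+1+2))).re := by
            rw [harg (t+t+1) (2*t+1) (by omega), harg ((t+1)+(t+1)+1) (2*t+1+2) (by omega)]
  have hbase1 : 0 < (ω (A ^ 1)).re := by
    rw [pow_one]
    have := (Complex.lt_def.mp hωA).1
    simpa using this
  have main : ∀ n : ℕ, 0 < (ω (A ^ n)).re ∧ 0 < (ω (A ^ (n+1))).re := by
    intro n
    induction n with
    | zero =>
        refine ⟨?_, by simpa using hbase1⟩
        rw [pow_zero, hω_one]
        simp
    | succ n ih =>
        refine ⟨ih.2, ?_⟩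
        have h := hstep n
        nlinarith [ih.1, ih.2, h]
  exact fun n => (main n).1

end Tele

section Dyn2
set_option linter.unusedSectionVars false
variable {𝔄 : Type*} [NormedRing 𝔄] [StarRing 𝔄] [CStarRing 𝔄] [NormedAlgebra ℂ 𝔄]
    [StarModule ℂ 𝔄] [CompleteSpace 𝔄]
    {K : Type*} [Semigroup K]
    (ω : 𝔄 →ₗ[ℂ] ℂ) (τ : K → 𝔄 →ₗ[ℂ] 𝔄)
    (hω_pos : ∀ A : 𝔄, 0 ≤ ω (star A * A))
    (hτ_mul : ∀ g h : K, ∀ A : 𝔄, τ g (τ h A) = τ (g * h) A)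
    (hτ_ω : ∀ g : K, ∀ A : 𝔄, omegaSeminorm ω (τ g A) = omegaSeminorm ω A)

private lemma iter_map_sub (g : K) : ∀ (n : ℕ) (X Y : 𝔄),
    (⇑(τ g))^[n] X - (⇑(τ g))^[n] Y = (⇑(τ g))^[n] (X - Y) := by
  intro n
  induction n with
  | zero => intro X Y; rfl
  | succ n ih =>
      intro X Y
      rw [Function.iterate_succ_apply', Function.iterate_succ_apply',
        Function.iterate_succ_apply', ← map_sub, ih]

include hω_pos hτ_mul hτ_ω in
private lemma hybrid_bound (A : 𝔄) (hstar : ∀ Z : 𝔄, ω (star Z) = starRingEnd ℂ (ω Z))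
    (g r h : K) (ε4 : ℝ) (hε4 : 0 ≤ ε4)
    (hgr : ∀ w : K, omegaSeminorm ω (τ g (τ w A) - τ r (τ w A)) ≤ ε4) :
    ∀ mm : ℕ, omegaSeminorm ω
      ((fun X => τ g (τ h X))^[mm] A - (fun X => τ r (τ h X))^[mm] A) ≤ mm * ε4 := by
  have hQw : ∀ mm : ℕ, ∃ w : K, τ h ((fun X => τ r (τ h X))^[mm] A) = τ w A := by
    intro mm
    induction mm with
    | zero => exact ⟨h, rfl⟩
    | succ mm ih =>
        obtain ⟨w, hw⟩ := ih
        refine ⟨h * (r * w), ?_⟩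
        rw [Function.iterate_succ_apply', hw, hτ_mul, hτ_mul, mul_assoc]
  intro mm
  induction mm with
  | zero => simp [omegaSeminorm]
  | succ mm ih =>
      obtain ⟨w, hw⟩ := hQw mm
      set P := (fun X => τ g (τ h X))^[mm] A with hPdef
      set Q := (fun X => τ r (τ h X))^[mm] A with hQdef
      have h1 : omegaSeminorm ω (τ g (τ h P) - τ g (τ h Q)) ≤ mm * ε4 := by
        rw [← map_sub, ← map_sub, hτ_ω, hτ_ω]
        exact ih
      have h2 : omegaSeminorm ω (τ g (τ h Q) - τ r (τ h Q)) ≤ ε4 := by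
        rw [hw]
        exact hgr w
      calc omegaSeminorm ω ((fun X => τ g (τ h X))^[mm+1] A - (fun X => τ r (τ h X))^[mm+1] A)
          = omegaSeminorm ω (τ g (τ h P) - τ r (τ h Q)) := by
            rw [Function.iterate_succ_apply', Function.iterate_succ_apply']
        _ ≤ omegaSeminorm ω (τ g (τ h P) - τ g (τ h Q))
            + omegaSeminorm ω (τ g (τ h Q) - τ r (τ h Q)) :=
            sn_sub_triangle ω hω_pos hstar _ _ _
        _ ≤ mm * ε4 + ε4 := add_le_add h1 h2
        _ = (mm + 1 : ℕ) * ε4 := by push_cast; ring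

include hω_pos hτ_mul hτ_ω in
private lemma pigeonhole_power (A : 𝔄) (hstar : ∀ Z : 𝔄, ω (star Z) = starRingEnd ℂ (ω Z))
    (k : ℕ) (m : Fin (k+1) → ℕ) (εt : ℝ) (hεt : 0 < εt)
    (M : Finset 𝔄) (hM : ∀ g' : K, ∃ B ∈ M, omegaSeminorm ω (τ g' A - B) < εt) (g : K) :
    ∃ w : K, ∀ j : Fin (k+1), omegaSeminorm ω ((⇑(τ (g * w)))^[m j] A - A) ≤ 2*εt := by
  classical
  obtain ⟨B₀, hB₀, _⟩ := hM g
  choose φ hφmem hφ using hM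
  set T := Fintype.card (Fin (k+1) → {x // x ∈ M}) with hT
  set color : Fin (T+1) → (Fin (k+1) → {x // x ∈ M}) := fun n j =>
    if m j = 0 then ⟨B₀, hB₀⟩ else ⟨φ (sgpow g (2*(n.1+1)*(m j) - 1)), hφmem _⟩ with hcolor
  have hcard : Fintype.card (Fin (k+1) → {x // x ∈ M}) < Fintype.card (Fin (T+1)) := by
    simp [hT]
  obtain ⟨n₁, n₂, hne, heq⟩ := Fintype.exists_ne_map_eq_of_card_lt color hcard
  obtain ⟨a, b, hab, habc⟩ : ∃ a b : Fin (T+1), a.1 < b.1 ∧ color a = color b := by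
    rcases Ne.lt_or_gt hne with h12 | h21
    · exact ⟨n₁, n₂, h12, heq⟩
    · exact ⟨n₂, n₁, h21, heq.symm⟩
  set d := b.1 - a.1 with hd
  have hd1 : 1 ≤ d := by omega
  have key : ∀ j : Fin (k+1), m j ≠ 0 →
      omegaSeminorm ω ((⇑(τ g))^[2*d*(m j)] A - A) < 2*εt := by
    intro j hj
    have hcj := congrFun habc j
    simp only [hcolor, if_neg hj] at hcj
    have hBeq : φ (sgpow g (2*(a.1+1)*(m j) - 1)) = φ (sgpow g (2*(b.1+1)*(m j) - 1)) :=
      congrArg Subtype.val hcj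
    set x := sgpow g (2*(a.1+1)*(m j) - 1) with hx
    set y := sgpow g (2*(b.1+1)*(m j) - 1) with hy
    have h1 : omegaSeminorm ω (τ x A - φ x) < εt := hφ x
    have h2 : omegaSeminorm ω (τ y A - φ x) < εt := by rw [hBeq]; exact hφ y
    have hxy : omegaSeminorm ω (τ x A - τ y A) < 2*εt := by
      have := sn_sub_triangle ω hω_pos hstar (τ x A) (φ x) (τ y A)
      rw [sn_sub_rev ω (φ x) (τ y A)] at this
      linarith
    have hmj : 0 < m j := Nat.pos_of_ne_zero hj
    have hpa : 1 ≤ 2*(a.1+1)*(m j) := Nat.one_le_iff_ne_zero.mpr (by positivity)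
    have hpb : 1 ≤ 2*(b.1+1)*(m j) := Nat.one_le_iff_ne_zero.mpr (by positivity)
    have hxA : τ x A = (⇑(τ g))^[2*(a.1+1)*(m j)] A := by
      rw [hx, tau_sgpow τ hτ_mul g]
      congr 1
      exact Nat.sub_add_cancel hpa
    have hyA : τ y A = (⇑(τ g))^[2*(b.1+1)*(m j)] A := by
      rw [hy, tau_sgpow τ hτ_mul g]
      congr 1
      exact Nat.sub_add_cancel hpb
    have hsplit : 2*(b.1+1)*(m j) = 2*(a.1+1)*(m j) + 2*d*(m j) := by
      have h5 : 2*(b.1+1) = 2*(a.1+1) + 2*d := by omega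
      rw [h5, add_mul]
    rw [hxA, hyA, hsplit, Function.iterate_add_apply,
      iter_map_sub τ, iter_sn ω τ hτ_ω, sn_sub_rev] at hxy
    exact hxy
  refine ⟨sgpow g (2*d - 2), ?_⟩
  have he : g * sgpow g (2*d - 2) = sgpow g (2*d - 1) := by
    rw [← sgpow_succ_left]
    congr 1
    omega
  have htaue : ∀ X : 𝔄, τ (g * sgpow g (2*d - 2)) X = (⇑(τ g))^[2*d] X := by
    intro X
    rw [he, tau_sgpow τ hτ_mul g]
    congr 1
    omega
  intro j
  by_cases hj : m j = 0
  · simp [hj, omegaSeminorm]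
    positivity
  · rw [iter_iter τ htaue (m j) A]
    exact (key j hj).le

end Dyn2

section Est
set_option linter.unusedSectionVars false
variable {𝔄 : Type*} [NormedRing 𝔄] [StarRing 𝔄] [CStarRing 𝔄] [NormedAlgebra ℂ 𝔄]
    [StarModule ℂ 𝔄] [CompleteSpace 𝔄]
    {K : Type*} [Semigroup K]
    (ω : 𝔄 →ₗ[ℂ] ℂ) (τ : K → 𝔄 →ₗ[ℂ] 𝔄)
    (hω_pos : ∀ A : 𝔄, 0 ≤ ω (star A * A))
    (hω_one : ω 1 = 1)
    (hω_tr : ∀ A B : 𝔄, ω (A * B) = ω (B * A))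
    (hτ_norm : ∀ g : K, ∀ A : 𝔄, ‖τ g A‖ ≤ ‖A‖)

include hω_pos hω_one hω_tr hτ_norm in
private lemma product_estimate (hstar : ∀ Z : 𝔄, ω (star Z) = starRingEnd ℂ (ω Z))
    (hone : ‖(1 : 𝔄)‖ = 1) (A : 𝔄) (k : ℕ) (m : Fin (k+1) → ℕ) (εf : ℝ) (hεf0 : 0 ≤ εf)
    (hhalf : ((k:ℝ)+1) * εf * (‖A‖+1)^(k+1) ≤ (ω (A^(k+1))).re / 2)
    (x : K) (hE : ∀ j : Fin (k+1), omegaSeminorm ω ((⇑(τ x))^[m j] A - A) ≤ εf) :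
    (ω (A^(k+1))).re / 2
      ≤ ‖ω (List.ofFn fun j : Fin (k+1) => (⇑(τ x))^[m j] A).prod‖ := by
  set u := (ω (A^(k+1))).re with hu
  set R := ‖A‖ + 1 with hR
  have hR1 : (1:ℝ) ≤ R := by have := norm_nonneg A; rw [hR]; linarith
  set B : Fin (k+1) → 𝔄 := fun j => (⇑(τ x))^[m j] A with hB
  set C : Fin (k+1) → 𝔄 := fun _ => A with hC
  have hBn : ∀ j, ‖B j‖ ≤ R := by
    intro j
    have := iter_norm τ hτ_norm x (m j) A
    rw [hR]; linarith
  have hCn : ∀ j, ‖C j‖ ≤ R := by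
    intro j
    simp only [hC, hR]
    linarith [norm_nonneg A]
  have hdiff := sn_prod_diff ω hω_pos hω_one hω_tr hstar hone (k+1) B C R hR1 hBn hCn
  have hsum : (∑ j : Fin (k+1), omegaSeminorm ω (B j - C j)) ≤ ((k:ℝ)+1) * εf := by
    calc (∑ j : Fin (k+1), omegaSeminorm ω (B j - C j)) ≤ ∑ _j : Fin (k+1), εf :=
          Finset.sum_le_sum (fun j _ => hE j)
      _ = ((k:ℝ)+1) * εf := by
          rw [Finset.sum_const, Finset.card_univ, Fintype.card_fin, nsmul_eq_mul]
          push_cast; ring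
  have hRp : (0:ℝ) ≤ R^(k+1) := by positivity
  have htot : omegaSeminorm ω ((List.ofFn B).prod - (List.ofFn C).prod) ≤ u / 2 :=
    le_trans hdiff (le_trans (mul_le_mul_of_nonneg_right hsum hRp) hhalf)
  have hCprod : (List.ofFn C).prod = A^(k+1) := by
    rw [hC, List.ofFn_const, List.prod_replicate]
  have habs1 : ‖ω ((List.ofFn B).prod) - ω (A^(k+1))‖ ≤ u / 2 := by
    rw [← map_sub, ← hCprod]
    exact le_trans (abs_omega_le ω hω_pos hω_one hstar _) htot
  have habs2 : u ≤ ‖ω (A^(k+1))‖ := by rw [hu]; exact Complex.re_le_norm _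
  have htri := norm_add_le (ω ((List.ofFn B).prod))
    (ω (A^(k+1)) - ω ((List.ofFn B).prod))
  rw [add_sub_cancel] at htri
  have : ‖ω (A^(k+1)) - ω ((List.ofFn B).prod)‖
      = ‖ω ((List.ofFn B).prod) - ω (A^(k+1))‖ := by
    rw [norm_sub_rev]
  linarith

end Est


/-- Theorem 4.3 (the Szemerédi property for compact C*-dynamical systems): let
`(𝔄, ω, τ, K)` be a compact C*-dynamical system with `ω` a trace and `(K, Σ, μ)` a
Følner semigroup, let `A ∈ 𝔄` be positive with `ω(A) > 0`, let
`m₀, …, m_k ∈ ℕ ∪ {0}`, and assume the relevant functions of `g` are `Σ`-measurable.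
Then there is a Følner net `(Λ_α)` with
`liminf_α (1/μ(Λ_α)) ∫_{Λ_α} |ω(τ_{g^{m₀}}(A) ⋯ τ_{g^{m_k}}(A))| dμ(g) > 0`
(here `τ_{g^{m_j}}` is realised as the `m_j`-th iterate of `τ_g`, with `τ_{g⁰}(A) = A`). -/
theorem szemeredi_property_compact_CStar_system
    {𝔄 : Type*} [NormedRing 𝔄] [StarRing 𝔄] [CStarRing 𝔄] [NormedAlgebra ℂ 𝔄]
    [StarModule ℂ 𝔄] [CompleteSpace 𝔄]
    {K : Type*} [Semigroup K] [MeasurableSpace K]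
    {ι : Type*} [Preorder ι] [Nonempty ι] [IsDirected ι (· ≤ ·)]
    (μ : Measure K)
    (ω : 𝔄 →ₗ[ℂ] ℂ) (τ : K → 𝔄 →ₗ[ℂ] 𝔄)
    -- `ω` is a trace:
    (hω_pos : ∀ A : 𝔄, 0 ≤ ω (star A * A))
    (hω_one : ω 1 = 1)
    (hω_tr : ∀ A B : 𝔄, ω (A * B) = ω (B * A))
    -- `(𝔄, ω, τ, K)` is a compact C*-dynamical system:
    (hτ_mul : ∀ g h : K, ∀ A : 𝔄, τ g (τ h A) = τ (g * h) A)
    (hτ_ω : ∀ g : K, ∀ A : 𝔄, omegaSeminorm ω (τ g A) = omegaSeminorm ω A)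
    (hτ_norm : ∀ g : K, ∀ A : 𝔄, ‖τ g A‖ ≤ ‖A‖)
    (hcompact : ∀ A : 𝔄, ∀ ε : ℝ, 0 < ε → ∃ M : Finset 𝔄, ∀ g : K,
      ∃ B ∈ M, omegaSeminorm ω (τ g A - B) < ε)
    -- `(K, Σ, μ)` is a Følner semigroup:
    (hcancel : ∀ a b c : K, a * c = b * c → a = b)
    (hinv_meas : ∀ (g : K) (S : Set K), MeasurableSet S → MeasurableSet ((· * g) '' S))
    (hinv : ∀ (g : K) (S : Set K), MeasurableSet S → μ ((· * g) '' S) = μ S)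
    (hrefl : ∀ (V : Set K) (g : K), MeasurableSet ((· * g) '' V) → MeasurableSet V)
    (Λ : ι → Set K) (hΛ : IsFolnerNet μ Λ)
    -- the data of the theorem:
    (A : 𝔄) (hA : ∃ c : 𝔄, A = star c * c) (hωA : 0 < ω A)
    (k : ℕ) (m : Fin (k + 1) → ℕ)
    (hmeas₁ : Measurable fun g : K =>
      ω (List.ofFn fun j : Fin (k + 1) => (fun B => τ g B)^[m j] A).prod)
    (hmeas₂ : ∀ j : Fin (k + 1),
      Measurable fun g : K => omegaSeminorm ω ((fun B => τ g B)^[m j] A - A)) :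
    ∃ Λ' : ι → Set K, IsFolnerNet μ Λ' ∧
      0 < liminf (fun α =>
        (∫⁻ g in Λ' α, ENNReal.ofReal ‖
          (ω (List.ofFn fun j : Fin (k + 1) => (fun B => τ g B)^[m j] A).prod)‖ ∂μ) /
            μ (Λ' α)) atTop := by
  classical
  obtain ⟨hmeas_trans, hΛmeas, hΛev, hΛfol⟩ := hΛ
  haveI hNeBot : (atTop : Filter ι).NeBot := Filter.atTop_neBot_iff.mpr ⟨‹_›, ‹_›⟩
  -- K is nonempty
  have hKne : Nonempty K := by
    obtain ⟨α, hα⟩ := hΛev.exists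
    rcases Set.eq_empty_or_nonempty (Λ α) with h | h
    · rw [h] at hα; simp at hα
    · exact ⟨h.some⟩
  obtain ⟨g₀⟩ := hKne
  -- basics
  have h10 : (1 : 𝔄) ≠ 0 := by
    intro h
    have h0 : ω 1 = 0 := by rw [h]; exact map_zero ω
    rw [hω_one] at h0
    exact one_ne_zero h0
  haveI : Nontrivial 𝔄 := ⟨⟨1, 0, h10⟩⟩
  have hone : ‖(1:𝔄)‖ = 1 := CStarRing.norm_one
  have hstar := omega_star' ω hω_pos
  -- constants
  set u := (ω (A ^ (k+1))).re with hu
  have hupos : 0 < u := omega_pow_pos ω hω_pos hω_one hstar A hA hωA (k+1)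
  set R := ‖A‖ + 1 with hR
  have hR1 : (1:ℝ) ≤ R := by have := norm_nonneg A; rw [hR]; linarith
  set εf := u / (2 * ((k:ℝ)+1) * R^(k+1)) with hεf
  have hεfpos : 0 < εf := by
    rw [hεf]
    have : (0:ℝ) < R^(k+1) := by positivity
    positivity
  have hεfhalf : ((k:ℝ)+1) * εf * R^(k+1) ≤ u/2 := by
    have hRne : (0:ℝ) < R^(k+1) := by positivity
    have hk1 : (0:ℝ) < (k:ℝ)+1 := by positivity
    refine le_of_eq ?_
    rw [hεf]
    field_simp
  set Mb := Finset.univ.sup m with hMb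
  have hmle : ∀ j, m j ≤ Mb := fun j => Finset.le_sup (Finset.mem_univ j)
  set εt := εf / (4*(Mb:ℝ) + 2) with hεt
  have hεtpos : 0 < εt := by rw [hεt]; positivity
  have hεteq : (4*(Mb:ℝ) + 2) * εt = εf := by
    rw [hεt]
    field_simp
  -- compactness data
  obtain ⟨M, hM⟩ := hcompact A εt hεtpos
  choose φA hφAmem hφA using hM
  have hMB : ∀ B : 𝔄, ∃ MB : Finset 𝔄, ∀ g : K,
      ∃ C ∈ MB, omegaSeminorm ω (τ g B - C) < εt := fun B => hcompact B εt hεtpos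
  choose MB hMBspec using hMB
  choose pickB hpickmem hpick using hMBspec
  set Mplus : Finset 𝔄 := insert A M with hMplus
  -- colors
  set CC := ∀ B : {x // x ∈ Mplus}, {y // y ∈ MB B.1} with hCC
  set colorA : K → CC := fun g B => ⟨pickB B.1 g, hpickmem B.1 g⟩ with hcolorA
  -- closeness from equal colors
  have hclose : ∀ g r : K, colorA g = colorA r → ∀ w : K,
      omegaSeminorm ω (τ g (τ w A) - τ r (τ w A)) ≤ 4 * εt := by
    intro g r hgr w
    have hBplus : (φA w) ∈ Mplus := Finset.mem_insert_of_mem (hφAmem w)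
    have hcb := congrFun hgr ⟨φA w, hBplus⟩
    have hyeq : pickB (φA w) g = pickB (φA w) r := congrArg Subtype.val hcb
    have t1 : omegaSeminorm ω (τ g (τ w A) - τ g (φA w)) < εt := by
      rw [← map_sub, hτ_ω]
      exact hφA w
    have t2 : omegaSeminorm ω (τ g (φA w) - pickB (φA w) g) < εt := hpick (φA w) g
    have t3 : omegaSeminorm ω (pickB (φA w) g - τ r (φA w)) < εt := by
      rw [hyeq, sn_sub_rev]
      exact hpick (φA w) r
    have t4 : omegaSeminorm ω (τ r (φA w) - τ r (τ w A)) < εt := by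
      rw [← map_sub, hτ_ω, sn_sub_rev]
      exact hφA w
    have tri1 := sn_sub_triangle ω hω_pos hstar (τ g (τ w A)) (τ g (φA w)) (τ r (τ w A))
    have tri2 := sn_sub_triangle ω hω_pos hstar (τ g (φA w)) (pickB (φA w) g) (τ r (τ w A))
    have tri3 := sn_sub_triangle ω hω_pos hstar (pickB (φA w) g) (τ r (φA w)) (τ r (τ w A))
    linarith
  -- pigeonhole
  have pig : ∀ g : K, ∃ w : K, ∀ j : Fin (k+1),
      omegaSeminorm ω ((⇑(τ (g * w)))^[m j] A - A) ≤ 2*εt :=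
    fun g => pigeonhole_power ω τ hω_pos hτ_mul hτ_ω A hstar k m εt hεtpos M
      (fun g' => ⟨φA g', hφAmem g', hφA g'⟩) g
  set rep : CC → K := fun c => if hc : ∃ g, colorA g = c then hc.choose else g₀ with hrep
  choose hwfun hwspec using fun c => pig (rep c)
  -- the return set E
  set E := {x : K | ∀ j : Fin (k+1),
      omegaSeminorm ω ((fun B => τ x B)^[m j] A - A) ≤ εf} with hE
  have hEmeas : MeasurableSet E := by
    have hEeq : E = ⋂ j : Fin (k+1),
        {x : K | omegaSeminorm ω ((fun B => τ x B)^[m j] A - A) ≤ εf} := by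
      ext x
      simp only [hE, Set.mem_setOf_eq, Set.mem_iInter]
    rw [hEeq]
    exact MeasurableSet.iInter (fun j => measurableSet_le (hmeas₂ j) measurable_const)
  -- covering
  set V : CC → Set K := fun c => {x : K | x * hwfun c ∈ E} with hV
  have hcover : ∀ g : K, g ∈ V (colorA g) := by
    intro g
    have hex : ∃ g', colorA g' = colorA g := ⟨g, rfl⟩
    have hrc : colorA (rep (colorA g)) = colorA g := by
      rw [hrep]
      simp only [dif_pos hex]
      exact hex.choose_spec
    set r := rep (colorA g) with hrdef
    set w := hwfun (colorA g) with hwdef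
    show g * w ∈ E
    intro j
    by_cases hj : m j = 0
    · simp only [hj, Function.iterate_zero, id_eq, sub_self]
      have : omegaSeminorm ω (0:𝔄) = 0 := by simp [omegaSeminorm]
      rw [this]
      exact hεfpos.le
    · have hclose' := hclose g r hrc.symm
      have hhyb := hybrid_bound ω τ hω_pos hτ_mul hτ_ω A hstar g r w (4*εt)
        (by positivity) hclose' (m j)
      have hiter1 : ∀ (g' : K), (⇑(τ (g' * w)))^[m j] A = (fun X => τ g' (τ w X))^[m j] A :=
        fun g' => iter_congr (fun X => (hτ_mul g' w X).symm) (m j) A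
      have h2 : omegaSeminorm ω ((⇑(τ (r * w)))^[m j] A - A) ≤ 2*εt := hwspec (colorA g) j
      have tri := sn_sub_triangle ω hω_pos hstar ((⇑(τ (g*w)))^[m j] A)
        ((⇑(τ (r*w)))^[m j] A) A
      have hmid : omegaSeminorm ω ((⇑(τ (g*w)))^[m j] A - (⇑(τ (r*w)))^[m j] A)
          ≤ (m j) * (4*εt) := by
        rw [hiter1 g, hiter1 r]
        exact hhyb
      have hmb : ((m j : ℝ)) * (4*εt) ≤ (Mb:ℝ) * (4*εt) := by
        have : ((m j : ℝ)) ≤ (Mb : ℝ) := by exact_mod_cast hmle j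
        nlinarith [hεtpos.le]
      show omegaSeminorm ω ((fun B => τ (g*w) B)^[m j] A - A) ≤ εf
      calc omegaSeminorm ω ((fun B => τ (g*w) B)^[m j] A - A)
          = omegaSeminorm ω ((⇑(τ (g*w)))^[m j] A - A) := rfl
        _ ≤ (m j) * (4*εt) + 2*εt := by linarith
        _ ≤ (Mb:ℝ) * (4*εt) + 2*εt := by linarith
        _ = (4*(Mb:ℝ) + 2) * εt := by ring
        _ = εf := hεteq
  have hVmeas : ∀ c, MeasurableSet (V c) := by
    intro c
    apply hrefl (V c) (hwfun c)
    have himg : (· * hwfun c) '' (V c) = E ∩ ((· * hwfun c) '' Set.univ) := by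
      ext x
      constructor
      · rintro ⟨v, hv, rfl⟩
        exact ⟨hv, ⟨v, trivial, rfl⟩⟩
      · rintro ⟨hxE, ⟨v, -, rfl⟩⟩
        exact ⟨v, hxE, rfl⟩
    rw [himg]
    exact hEmeas.inter (hinv_meas _ _ MeasurableSet.univ)
  set numC : ℕ := Fintype.card CC with hnum
  have hnum0 : 0 < numC := Fintype.card_pos_iff.mpr ⟨colorA g₀⟩
  -- per-index choice of a good color
  have hchoice : ∀ α : ι, ∃ c : CC, (0 < μ (Λ α) ∧ μ (Λ α) < ∞) →
      μ (Λ α) / numC ≤ μ (V c ∩ Λ α) := by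
    intro α
    obtain ⟨c, -, hc⟩ := Finset.exists_max_image Finset.univ
      (fun c : CC => μ (V c ∩ Λ α)) ⟨colorA g₀, Finset.mem_univ _⟩
    refine ⟨c, fun hα => ?_⟩
    have hsub : Λ α ⊆ ⋃ c' ∈ (Finset.univ : Finset CC), (V c' ∩ Λ α) := by
      intro x hx
      exact Set.mem_biUnion (Finset.mem_univ (colorA x)) ⟨hcover x, hx⟩
    have hle : μ (Λ α) ≤ ∑ c' : CC, μ (V c' ∩ Λ α) :=
      le_trans (measure_mono hsub) (measure_biUnion_finset_le _ _)
    have hsum : ∑ c' : CC, μ (V c' ∩ Λ α) ≤ (numC : ℝ≥0∞) * μ (V c ∩ Λ α) := by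
      calc ∑ c' : CC, μ (V c' ∩ Λ α) ≤ ∑ _c' : CC, μ (V c ∩ Λ α) :=
            Finset.sum_le_sum (fun c' _ => hc c' (Finset.mem_univ c'))
        _ = (numC : ℝ≥0∞) * μ (V c ∩ Λ α) := by
            rw [Finset.sum_const, Finset.card_univ, ← hnum, nsmul_eq_mul]
    refine (ENNReal.div_le_iff_le_mul (Or.inl ?_) (Or.inl ?_)).mpr ?_
    · exact_mod_cast hnum0.ne'
    · exact ENNReal.natCast_ne_top numC
    · rw [mul_comm]
      exact le_trans hle hsum
  choose cα hcα using hchoice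
  set hh : ι → K := fun α => hwfun (cα α) with hhh
  set Λ' : ι → Set K := fun α => (· * hh α) '' (Λ α) with hΛ'
  have hμeq : ∀ α, μ (Λ' α) = μ (Λ α) := fun α => hinv _ _ (hΛmeas α)
  refine ⟨Λ', ⟨hmeas_trans, fun α => hinv_meas _ _ (hΛmeas α), ?_, ?_⟩, ?_⟩
  · filter_upwards [hΛev] with α hα
    rw [hμeq α]
    exact hα
  · intro g
    have heqfun : ∀ α, μ ((Λ α) ∆ ((g * ·) '' Λ α)) / μ (Λ α)
        = μ ((Λ' α) ∆ ((g * ·) '' Λ' α)) / μ (Λ' α) := by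
      intro α
      have hinj : Function.Injective (· * hh α) := fun a b hab => hcancel a b _ hab
      have hcomm : ((g * ·) '' ((· * hh α) '' Λ α)) = (· * hh α) '' ((g * ·) '' Λ α) := by
        rw [Set.image_image, Set.image_image]
        simp only [mul_assoc]
      have hsymm : (Λ' α) ∆ ((g * ·) '' Λ' α) = (· * hh α) '' ((Λ α) ∆ ((g * ·) '' Λ α)) := by
        rw [hΛ']
        simp only
        rw [hcomm, Set.image_symmDiff hinj]
      rw [hsymm, hμeq α, hinv _ _ ((hΛmeas α).symmDiff (hmeas_trans g _ (hΛmeas α)))]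
    exact (hΛfol g).congr heqfun
  · -- the liminf bound
    set q := ENNReal.ofReal (u/2) with hq
    have hq0 : q ≠ 0 := by
      rw [hq]
      simp only [ne_eq, ENNReal.ofReal_eq_zero, not_le]
      linarith
    set c₀ := q / (numC : ℝ≥0∞) with hc₀
    have hc₀pos : 0 < c₀ := by
      rw [hc₀]
      exact ENNReal.div_pos hq0 (ENNReal.natCast_ne_top numC)
    refine lt_of_lt_of_le hc₀pos (Filter.le_liminf_of_le ?_ ?_)
    · isBoundedDefault
    filter_upwards [hΛev] with α hα
    have hVc := hcα α hα
    have himgsub : (· * hh α) '' (V (cα α) ∩ Λ α) ⊆ E ∩ Λ' α := by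
      rintro _ ⟨x, ⟨hxV, hxΛ⟩, rfl⟩
      exact ⟨hxV, ⟨x, hxΛ, rfl⟩⟩
    have hEcap : μ (Λ α) / numC ≤ μ (E ∩ Λ' α) := by
      refine le_trans hVc ?_
      rw [← hinv (hh α) _ ((hVmeas _).inter (hΛmeas α))]
      exact measure_mono himgsub
    have hpoint : ∀ x : K, E.indicator (fun _ => q) x
        ≤ ENNReal.ofReal ‖
          (ω (List.ofFn fun j : Fin (k + 1) => (fun B => τ x B)^[m j] A).prod)‖ := by
      intro x
      by_cases hx : x ∈ E
      · rw [Set.indicator_of_mem hx]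
        rw [hq]
        apply ENNReal.ofReal_le_ofReal
        exact product_estimate ω τ hω_pos hω_one hω_tr hτ_norm hstar hone A k m εf
          hεfpos.le hεfhalf x (fun j => hx j)
      · rw [Set.indicator_of_notMem hx]
        exact zero_le
    have hint : q * μ (E ∩ Λ' α) ≤ ∫⁻ x in Λ' α, ENNReal.ofReal ‖
        (ω (List.ofFn fun j : Fin (k + 1) => (fun B => τ x B)^[m j] A).prod)‖ ∂μ := by
      have h1 : q * μ (E ∩ Λ' α) = ∫⁻ x in Λ' α, E.indicator (fun _ => q) x ∂μ := by
        rw [lintegral_indicator hEmeas, setLIntegral_const,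
          Measure.restrict_apply hEmeas]
      rw [h1]
      exact lintegral_mono hpoint
    have hdiveq : q * (μ (Λ α) / numC) / μ (Λ α) = c₀ := by
      rw [hc₀, div_eq_mul_inv, div_eq_mul_inv, div_eq_mul_inv]
      have hmm : μ (Λ α) * (μ (Λ α))⁻¹ = 1 := ENNReal.mul_inv_cancel hα.1.ne' hα.2.ne
      calc q * (μ (Λ α) * (numC:ℝ≥0∞)⁻¹) * (μ (Λ α))⁻¹
          = q * (numC:ℝ≥0∞)⁻¹ * (μ (Λ α) * (μ (Λ α))⁻¹) := by ring
        _ = q * (numC:ℝ≥0∞)⁻¹ := by rw [hmm, mul_one]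
    calc c₀ = q * (μ (Λ α) / numC) / μ (Λ α) := hdiveq.symm
      _ ≤ q * μ (E ∩ Λ' α) / μ (Λ α) :=
          ENNReal.div_le_div_right (mul_le_mul_right hEcap q) _
      _ = q * μ (E ∩ Λ' α) / μ (Λ' α) := by rw [hμeq α]
      _ ≤ (∫⁻ x in Λ' α, ENNReal.ofReal ‖
          (ω (List.ofFn fun j : Fin (k + 1) => (fun B => τ x B)^[m j] A).prod)‖ ∂μ)
            / μ (Λ' α) := ENNReal.div_le_div_right hint _
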